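/- Let G be a countable group with a weakly mixing measure-preserving action on a probability space (X,μ). Let 𝒢 be a Polish group whose topology is induced by a complete metric d that is bi-invariant (d(ag, ah) = d(g, h) = d(ga, ha) for all a, g, h ∈ 𝒢), and let K be a closed subgroup of 𝒢. Let γ : G × X → K be a 1-cocycle, let v : X → 𝒢 be a measurable map and θ : G → 𝒢 a group homomorphism such that γ(g, x) = v(g • x)·θ(g)·v(x)⁻¹ for μ-a.e. x, for every g ∈ G. If v₀ ∈ 𝒢 is an essential value of v (i.e., μ({x : d(v(x), v₀) < ε}) > 0 for every ε > 0), then v(x)·v₀⁻¹ ∈ K for μ-a.e. x ∈ X, and v₀·θ(g)·v₀⁻¹ ∈ K for every g ∈ G. -/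

import Mathlib

open MeasureTheory

noncomputable section

/-- **Popa's untwisting lemma for essential values.**
Let `G` be a countable group with a weakly mixing measure-preserving action on `(X,μ)`, let
`𝓖` be a Polish group with a complete bi-invariant metric, `K ≤ 𝓖` a closed subgroup, and
`γ` a `K`-valued `1`-cocycle untwisted in `𝓖` as `γ(g,x) = v(g•x)·θ(g)·v(x)⁻¹`.  If `v₀` is
an essential value of `v`, then `v(x)·v₀⁻¹ ∈ K` for a.e. `x` and `v₀·θ(g)·v₀⁻¹ ∈ K` for
every `g`. -/
theorem essential_value_untwisting
    {G : Type} [Group G] [Countable G]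
    {X : Type} [MeasurableSpace X]
    (μ : Measure X) [IsProbabilityMeasure μ]
    (a : G → X → X)
    (hmeas : ∀ g, Measurable (a g)) (hmp : ∀ g, MeasurePreserving (a g) μ μ)
    (hone : ∀ x, a 1 x = x) (hmul : ∀ g h x, a (g * h) x = a g (a h x))
    (hwmix : ∀ S : Set (X × X), MeasurableSet S →
      (∀ g : G, (μ.prod μ) (symmDiff S ((fun p => (a g p.1, a g p.2)) ⁻¹' S)) = 0) →
      (μ.prod μ) S = 0 ∨ (μ.prod μ) Sᶜ = 0)
    (𝓖 : Type) [Group 𝓖] [MetricSpace 𝓖] [CompleteSpace 𝓖]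
    [TopologicalSpace.SeparableSpace 𝓖] [IsTopologicalGroup 𝓖]
    (hbi : ∀ c g h : 𝓖, dist (c * g) (c * h) = dist g h ∧ dist (g * c) (h * c) = dist g h)
    (K : Subgroup 𝓖) (hK : IsClosed (K : Set 𝓖))
    (γ : G → X → 𝓖) (hγK : ∀ g x, γ g x ∈ K)
    (hγmeas : ∀ g : G, @Measurable X 𝓖 _ (borel 𝓖) (γ g))
    (hcoc : ∀ g h : G, ∀ᵐ x ∂μ, γ (g * h) x = γ g (a h x) * γ h x)
    (v : X → 𝓖) (hv : @Measurable X 𝓖 _ (borel 𝓖) v)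
    (θ : G →* 𝓖)
    (huntwist : ∀ g : G, ∀ᵐ x ∂μ, γ g x = v (a g x) * θ g * (v x)⁻¹)
    (v₀ : 𝓖) (hess : ∀ ε : ℝ, 0 < ε → 0 < μ {x | dist (v x) v₀ < ε}) :
    (∀ᵐ x ∂μ, v x * v₀⁻¹ ∈ K) ∧ (∀ g : G, v₀ * θ g * v₀⁻¹ ∈ K) := by
  letI : MeasurableSpace 𝓖 := borel 𝓖
  haveI : BorelSpace 𝓖 := ⟨rfl⟩
  haveI := UniformSpace.secondCountable_of_separable 𝓖
  have hKne : (K : Set 𝓖).Nonempty := ⟨1, K.one_mem⟩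
  -- distance to 1 computes group distance
  have dist_one : ∀ g₁ g₂ : 𝓖, dist (g₁ * g₂⁻¹) 1 = dist g₁ g₂ := by
    intro g₁ g₂
    have h := (hbi g₂ (g₁ * g₂⁻¹) 1).2
    simpa [inv_mul_cancel_right] using h.symm
  -- lower bound principle for infDist to K
  have le_inf : ∀ (x : 𝓖) (b : ℝ), (∀ y ∈ (K : Set 𝓖), b ≤ dist x y) →
      b ≤ Metric.infDist x (K : Set 𝓖) := by
    intro x b hb
    by_contra hlt
    push_neg at hlt
    obtain ⟨y, hy, hd⟩ := (Metric.infDist_lt_iff hKne).1 hlt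
    exact absurd hd (not_lt.2 (hb y hy))
  -- invariance of infDist to K under left multiplication by elements of K
  have step_l : ∀ k ∈ K, ∀ x : 𝓖,
      Metric.infDist (k * x) (K : Set 𝓖) ≤ Metric.infDist x (K : Set 𝓖) := by
    intro k hk x
    refine le_inf x _ fun y hy => ?_
    have : dist x y = dist (k * x) (k * y) := ((hbi k x y).1).symm
    rw [this]
    exact Metric.infDist_le_dist_of_mem (K.mul_mem hk hy)
  have inv_left : ∀ k ∈ K, ∀ x : 𝓖,
      Metric.infDist (k * x) (K : Set 𝓖) = Metric.infDist x (K : Set 𝓖) := by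
    intro k hk x
    refine le_antisymm (step_l k hk x) ?_
    have := step_l k⁻¹ (K.inv_mem hk) (k * x)
    rwa [inv_mul_cancel_left] at this
  have step_r : ∀ k ∈ K, ∀ x : 𝓖,
      Metric.infDist (x * k) (K : Set 𝓖) ≤ Metric.infDist x (K : Set 𝓖) := by
    intro k hk x
    refine le_inf x _ fun y hy => ?_
    have : dist x y = dist (x * k) (y * k) := ((hbi k x y).2).symm
    rw [this]
    exact Metric.infDist_le_dist_of_mem (K.mul_mem hy hk)
  have inv_right : ∀ k ∈ K, ∀ x : 𝓖,
      Metric.infDist (x * k) (K : Set 𝓖) = Metric.infDist x (K : Set 𝓖) := by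
    intro k hk x
    refine le_antisymm (step_r k hk x) ?_
    have := step_r k⁻¹ (K.inv_mem hk) (x * k)
    rwa [mul_inv_cancel_right] at this
  -- the function on the product space
  set f : X × X → ℝ := fun p => Metric.infDist (v p.1 * (v p.2)⁻¹) (K : Set 𝓖) with hf_def
  have hf_meas : Measurable f :=
    (Metric.continuous_infDist_pt (K : Set 𝓖)).measurable.comp
      ((hv.comp measurable_fst).mul (hv.comp measurable_snd).inv)
  -- lifting a.e. statements to the product
  have lift1 : ∀ {P : X → Prop}, (∀ᵐ x ∂μ, P x) → ∀ᵐ p ∂μ.prod μ, P p.1 := by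
    intro P h
    have hmap : Measure.map Prod.fst (μ.prod μ) = μ := by
      rw [Measure.map_fst_prod]; simp
    refine ae_of_ae_map measurable_fst.aemeasurable ?_
    rw [hmap]; exact h
  have lift2 : ∀ {P : X → Prop}, (∀ᵐ x ∂μ, P x) → ∀ᵐ p ∂μ.prod μ, P p.2 := by
    intro P h
    have hmap : Measure.map Prod.snd (μ.prod μ) = μ := by
      rw [Measure.map_snd_prod]; simp
    refine ae_of_ae_map measurable_snd.aemeasurable ?_
    rw [hmap]; exact h
  -- a.e. invariance of f under the diagonal action
  have hTinv : ∀ g : G, ∀ᵐ p ∂μ.prod μ, f (a g p.1, a g p.2) = f p := by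
    intro g
    filter_upwards [lift1 (huntwist g), lift2 (huntwist g)] with p e1 e2
    have e1' : v (a g p.1) = γ g p.1 * v p.1 * (θ g)⁻¹ := by rw [e1]; group
    have e2' : v (a g p.2) = γ g p.2 * v p.2 * (θ g)⁻¹ := by rw [e2]; group
    show Metric.infDist (v (a g p.1) * (v (a g p.2))⁻¹) (K : Set 𝓖) = f p
    rw [e1', e2']
    have key : γ g p.1 * v p.1 * (θ g)⁻¹ * (γ g p.2 * v p.2 * (θ g)⁻¹)⁻¹
        = γ g p.1 * (v p.1 * (v p.2)⁻¹) * (γ g p.2)⁻¹ := by group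
    rw [key]
    calc Metric.infDist (γ g p.1 * (v p.1 * (v p.2)⁻¹) * (γ g p.2)⁻¹) (K : Set 𝓖)
        = Metric.infDist (γ g p.1 * (v p.1 * (v p.2)⁻¹)) (K : Set 𝓖) :=
          inv_right _ (K.inv_mem (hγK g p.2)) _
      _ = Metric.infDist (v p.1 * (v p.2)⁻¹) (K : Set 𝓖) := inv_left _ (hγK g p.1) _
  -- the sublevel sets of f are conull
  have key : ∀ ε : ℝ, 0 < ε → (μ.prod μ) {p | f p < ε}ᶜ = 0 := by
    intro ε hε
    set S := {p : X × X | f p < ε} with hS_def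
    have hS : MeasurableSet S := measurableSet_lt hf_meas measurable_const
    have hinv : ∀ g : G, (μ.prod μ) (symmDiff S ((fun p => (a g p.1, a g p.2)) ⁻¹' S)) = 0 := by
      intro g
      have h0 := hTinv g
      rw [ae_iff] at h0
      refine measure_mono_null ?_ h0
      intro p hp
      rcases Set.mem_symmDiff.1 hp with ⟨hp1, hp2⟩ | ⟨hp1, hp2⟩
      · intro heq
        exact hp2 (by simpa [S, heq] using (hp1 : f p < ε))
      · intro heq
        exact hp2 (by simpa [S, heq] using (hp1 : f (a g p.1, a g p.2) < ε))
    rcases hwmix S hS hinv with h0 | h1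
    · exfalso
      set A := {x | dist (v x) v₀ < ε / 2} with hA_def
      have hApos : 0 < μ A := hess _ (by linarith)
      have hsub : A ×ˢ A ⊆ S := by
        rintro ⟨x, y⟩ ⟨hx, hy⟩
        show f (x, y) < ε
        have hx' : dist (v x) v₀ < ε / 2 := hx
        have hy' : dist (v y) v₀ < ε / 2 := hy
        calc Metric.infDist (v x * (v y)⁻¹) (K : Set 𝓖)
            ≤ dist (v x * (v y)⁻¹) 1 := Metric.infDist_le_dist_of_mem K.one_mem
          _ = dist (v x) (v y) := dist_one _ _
          _ ≤ dist (v x) v₀ + dist v₀ (v y) := dist_triangle _ _ _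
          _ < ε := by rw [dist_comm v₀ (v y)]; linarith
      have hpos : 0 < (μ.prod μ) S := by
        refine lt_of_lt_of_le ?_ (measure_mono hsub)
        rw [Measure.prod_prod]
        exact ENNReal.mul_pos hApos.ne' hApos.ne'
      exact hpos.ne' h0
    · exact h1
  -- f = 0 a.e., hence v x * (v y)⁻¹ ∈ K a.e.
  have hae_mem : ∀ᵐ p ∂μ.prod μ, v p.1 * (v p.2)⁻¹ ∈ K := by
    have hall : ∀ᵐ p ∂μ.prod μ, ∀ n : ℕ, f p < 1 / (n + 1) := by
      rw [ae_all_iff]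
      intro n
      have := key (1 / (n + 1)) (by positivity)
      rw [ae_iff]
      simpa [Set.compl_setOf] using this
    filter_upwards [hall] with p hp
    have h0 : f p = 0 := by
      refine le_antisymm ?_ Metric.infDist_nonneg
      by_contra hlt
      push_neg at hlt
      obtain ⟨n, hn⟩ := exists_nat_one_div_lt hlt
      exact absurd (hp n) (not_lt.2 (by exact_mod_cast hn.le))
    exact (IsClosed.mem_iff_infDist_zero hK hKne).2 h0
  -- the function x ↦ infDist (v x * v₀⁻¹) K is a.e. constant
  have hxy : ∀ᵐ p ∂μ.prod μ,
      Metric.infDist (v p.1 * v₀⁻¹) (K : Set 𝓖) = Metric.infDist (v p.2 * v₀⁻¹) (K : Set 𝓖) := by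
    filter_upwards [hae_mem] with p hp
    have hrw : v p.2 * v₀⁻¹ = (v p.1 * (v p.2)⁻¹)⁻¹ * (v p.1 * v₀⁻¹) := by group
    rw [hrw]
    exact (inv_left _ (K.inv_mem hp) _).symm
  obtain ⟨x₀, hx₀⟩ := (Measure.ae_ae_of_ae_prod hxy).exists
  set c : ℝ := Metric.infDist (v x₀ * v₀⁻¹) (K : Set 𝓖) with hc_def
  have hc : ∀ᵐ x ∂μ, Metric.infDist (v x * v₀⁻¹) (K : Set 𝓖) = c := by
    filter_upwards [hx₀] with y hy using hy.symm
  have hc0 : c = 0 := by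
    have hge : (0 : ℝ) ≤ c := Metric.infDist_nonneg
    refine le_antisymm ?_ hge
    by_contra hpos
    push_neg at hpos
    have hfreq : ∃ᵐ x ∂μ, x ∈ {x | dist (v x) v₀ < c} :=
      frequently_ae_mem_iff.2 (hess c hpos).ne'
    obtain ⟨x, hx1, hx2⟩ := (hfreq.and_eventually hc).exists
    have : c ≤ dist (v x) v₀ := by
      rw [← hx2, ← dist_one (v x) v₀]
      exact Metric.infDist_le_dist_of_mem K.one_mem
    exact absurd hx1 (not_lt.2 this)
  have hmemae : ∀ᵐ x ∂μ, v x * v₀⁻¹ ∈ K := by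
    filter_upwards [hc] with x hx
    exact (IsClosed.mem_iff_infDist_zero hK hKne).2 (hc0 ▸ hx)
  refine ⟨hmemae, fun g => ?_⟩
  have h1 : ∀ᵐ x ∂μ, v (a g x) * v₀⁻¹ ∈ K := by
    refine ae_of_ae_map (p := fun y => v y * v₀⁻¹ ∈ K) (hmeas g).aemeasurable ?_
    rw [(hmp g).map_eq]; exact hmemae
  obtain ⟨x, hx1, hx2, hx3⟩ := (h1.and ((huntwist g).and hmemae)).exists
  have : v₀ * θ g * v₀⁻¹ = (v (a g x) * v₀⁻¹)⁻¹ * γ g x * (v x * v₀⁻¹) := by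
    rw [hx2]; group
  rw [this]
  exact K.mul_mem (K.mul_mem (K.inv_mem hx1) (hγK g x)) hx3
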